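/- Derivative identity for a rotating frame: let φ, θ, ψ : ℝ → ℝ be differentiable at t₀ and write Ω(t) = (φ(t), θ(t), ψ(t)). Then the matrix-valued map t ↦ R(Ω(t)) is differentiable at t₀ and its derivative there equals R(Ω(t₀)) · M, where M = −i(φ'(t₀) cos θ(t₀) + ψ'(t₀)) S₃ + (1/2)( i φ'(t₀) sin θ(t₀) − θ'(t₀) ) e^{iψ(t₀)} S₊ + (1/2)( i φ'(t₀) sin θ(t₀) + θ'(t₀) ) e^{−iψ(t₀)} S₋. -/

import Mathlib

open Matrix Complex

/-- Spin operator `S₃` for `2s = n`: diagonal with entries `j - n/2`. -/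
noncomputable def S3 (n : ℕ) : Matrix (Fin (n+1)) (Fin (n+1)) ℂ :=
  Matrix.diagonal fun j => (j : ℂ) - (n : ℂ) / 2

/-- Raising operator `S₊`: `(S₊)_{k+1,k} = √((k+1)(n-k))`. -/
noncomputable def Sp (n : ℕ) : Matrix (Fin (n+1)) (Fin (n+1)) ℂ :=
  Matrix.of fun j k =>
    if (j : ℕ) = (k : ℕ) + 1 then (Real.sqrt (((k : ℕ) + 1) * (n - (k : ℕ))) : ℂ) else 0

/-- Lowering operator `S₋ = S₊ᴴ`. -/
noncomputable def Sm (n : ℕ) : Matrix (Fin (n+1)) (Fin (n+1)) ℂ := (Sp n)ᴴ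

/-- `S₂ = (S₊ - S₋)/(2i)`. -/
noncomputable def S2 (n : ℕ) : Matrix (Fin (n+1)) (Fin (n+1)) ℂ :=
  (2 * Complex.I)⁻¹ • (Sp n - Sm n)

/-! ### Auxiliary development -/

noncomputable def K3 (n : ℕ) : Matrix (Fin (n+1)) (Fin (n+1)) ℂ := (-Complex.I) • S3 n
noncomputable def K2 (n : ℕ) : Matrix (Fin (n+1)) (Fin (n+1)) ℂ := (-(2:ℂ)⁻¹) • (Sp n - Sm n)
noncomputable def Pm (n : ℕ) : Matrix (Fin (n+1)) (Fin (n+1)) ℂ :=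
  (2:ℂ) • S3 n + Complex.I • (Sp n + Sm n)
noncomputable def Qm (n : ℕ) : Matrix (Fin (n+1)) (Fin (n+1)) ℂ :=
  (2:ℂ) • S3 n - Complex.I • (Sp n + Sm n)

lemma star_sqrtC (x : ℝ) : star ((Real.sqrt x : ℝ) : ℂ) = ((Real.sqrt x : ℝ) : ℂ) := by
  simp [Complex.star_def, Complex.conj_ofReal]

lemma sq_sqrtC {x : ℝ} (hx : 0 ≤ x) :
    ((Real.sqrt x : ℝ) : ℂ) * ((Real.sqrt x : ℝ) : ℂ) = (x : ℂ) := by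
  rw [← Complex.ofReal_mul, Real.mul_self_sqrt hx]

lemma comm1 (n : ℕ) : S3 n * Sp n - Sp n * S3 n = Sp n := by
  ext j k
  simp only [S3, Sp, Matrix.sub_apply, Matrix.diagonal_mul, Matrix.mul_diagonal, Matrix.of_apply]
  split_ifs with h
  · have hj : (j : ℂ) = (k : ℂ) + 1 := by
      have : ((j : ℕ) : ℂ) = ((k : ℕ) : ℂ) + 1 := by exact_mod_cast congrArg (Nat.cast (R := ℂ)) h
      exact_mod_cast this
    rw [hj]; ring
  · ring

lemma S3_herm (n : ℕ) : (S3 n)ᴴ = S3 n := by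
  ext j k
  by_cases h : j = k
  · subst h
    simp [S3, Matrix.conjTranspose_apply, Matrix.diagonal_apply_eq, Complex.star_def, map_sub,
      map_div₀, Complex.conj_natCast]
  · simp [S3, Matrix.conjTranspose_apply, Matrix.diagonal_apply_ne, h, Ne.symm h]

lemma comm2 (n : ℕ) : S3 n * Sm n - Sm n * S3 n = -(Sm n) := by
  have h := congrArg Matrix.conjTranspose (comm1 n)
  simp only [Matrix.conjTranspose_sub, Matrix.conjTranspose_mul, S3_herm] at h
  rw [show (Sp n)ᴴ = Sm n from rfl] at h
  conv_rhs => rw [← h]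
  abel

lemma hSpSm (n : ℕ) (j k : Fin (n+1)) :
    (Sp n * Sm n) j k =
      if j = k then ((j : ℕ) : ℂ) * (((n + 1 - (j : ℕ) : ℕ)) : ℂ) else 0 := by
  rw [Matrix.mul_apply]
  by_cases hj : (j : ℕ) = 0
  · rw [Finset.sum_eq_zero]
    · split_ifs with h
      · simp [hj]
      · rfl
    · intro l _
      simp [Sp, Sm, Matrix.conjTranspose_apply, hj, Matrix.of_apply]
  · have hj1 : 1 ≤ (j : ℕ) := Nat.one_le_iff_ne_zero.mpr hj
    have hjn : (j : ℕ) ≤ n := Nat.lt_succ_iff.mp j.is_lt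
    rw [Finset.sum_eq_single (⟨(j : ℕ) - 1, by omega⟩ : Fin (n+1))]
    · simp only [Sm, Matrix.conjTranspose_apply, Sp, Matrix.of_apply]
      rw [if_pos (by simp; omega : (j : ℕ) = ((⟨(j : ℕ) - 1, by omega⟩ : Fin (n+1)) : ℕ) + 1)]
      by_cases hk : (k : ℕ) = ((⟨(j : ℕ) - 1, by omega⟩ : Fin (n+1)) : ℕ) + 1
      · have hjk : j = k := by apply Fin.ext; simp at hk; omega
        rw [if_pos hk, if_pos hjk, star_sqrtC,
          sq_sqrtC (by
            have h1 : ((((j:ℕ) - 1 : ℕ)):ℝ) ≤ (n:ℝ) := by exact_mod_cast (by omega : (j:ℕ)-1 ≤ n)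
            nlinarith [Nat.cast_nonneg (α := ℝ) ((j:ℕ) - 1)])]
        push_cast [Nat.cast_sub (by omega : 1 ≤ (j:ℕ)),
          Nat.cast_sub (by omega : (j:ℕ) ≤ n + 1)]
        ring
      · have hjk : ¬ j = k := by intro h; subst h; simp at hk; omega
        rw [if_neg hk, if_neg hjk]
        simp
    · intro l _ hl
      have : ¬ (j : ℕ) = (l : ℕ) + 1 := by
        intro h
        apply hl; apply Fin.ext; simp; omega
      simp [Sp, Matrix.of_apply, this]
    · intro h; exact absurd (Finset.mem_univ _) h

lemma hSmSp (n : ℕ) (j k : Fin (n+1)) :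
    (Sm n * Sp n) j k =
      if j = k then (((j : ℕ) : ℂ) + 1) * (((n - (j : ℕ) : ℕ)) : ℂ) else 0 := by
  rw [Matrix.mul_apply]
  by_cases hj : (j : ℕ) = n
  · rw [Finset.sum_eq_zero]
    · split_ifs with h
      · subst h; simp [hj]
      · rfl
    · intro l _
      have : ¬ (l : ℕ) = (j : ℕ) + 1 := by have := l.is_lt; omega
      simp [Sp, Sm, Matrix.conjTranspose_apply, this, Matrix.of_apply]
  · have hjn : (j : ℕ) < n := by have := Nat.lt_succ_iff.mp j.is_lt; omega
    rw [Finset.sum_eq_single (⟨(j : ℕ) + 1, by omega⟩ : Fin (n+1))]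
    · simp only [Sm, Matrix.conjTranspose_apply, Sp, Matrix.of_apply]
      simp only [Fin.val_mk, eq_self_iff_true, if_true]
      by_cases hk : ((⟨(j : ℕ) + 1, by omega⟩ : Fin (n+1)) : ℕ) = (k : ℕ) + 1
      · have hjk : j = k := by apply Fin.ext; simp at hk; omega
        have hkj : (k : ℕ) = (j : ℕ) := by simp at hk; omega
        rw [if_pos hk, if_pos hjk, star_sqrtC, hkj,
          sq_sqrtC (by
            have h1 : (((j:ℕ)):ℝ) ≤ (n:ℝ) := by exact_mod_cast (by omega : (j:ℕ) ≤ n)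
            nlinarith [Nat.cast_nonneg (α := ℝ) (j:ℕ)])]
        push_cast [Nat.cast_sub (by omega : (j:ℕ) ≤ n)]
        ring
      · have hjk : ¬ j = k := by intro h; subst h; simp at hk
        rw [if_neg hk, if_neg hjk]
        simp
    · intro l _ hl
      have : ¬ (l : ℕ) = (j : ℕ) + 1 := by
        intro h; apply hl; apply Fin.ext; simp; omega
      simp [Sp, Sm, Matrix.conjTranspose_apply, this, Matrix.of_apply]
    · intro h; exact absurd (Finset.mem_univ _) h

lemma comm4 (n : ℕ) : Sp n * Sm n - Sm n * Sp n = (2 : ℂ) • S3 n := by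
  ext j k
  rw [Matrix.sub_apply, hSpSm, hSmSp, Matrix.smul_apply]
  by_cases h : j = k
  · subst h
    rw [if_pos rfl, if_pos rfl]
    simp only [S3, Matrix.diagonal_apply_eq, smul_eq_mul]
    have hjn : (j : ℕ) ≤ n := Nat.lt_succ_iff.mp j.is_lt
    push_cast [Nat.cast_sub (by omega : (j:ℕ) ≤ n + 1), Nat.cast_sub hjn]
    ring
  · rw [if_neg h, if_neg h]
    simp [S3, Matrix.diagonal_apply_ne _ h]

lemma hps (n : ℕ) : Sp n * S3 n = S3 n * Sp n - Sp n := by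
  rw [sub_eq_iff_eq_add.mp (comm1 n)]; abel

lemma hms (n : ℕ) : Sm n * S3 n = S3 n * Sm n + Sm n := by
  rw [sub_eq_iff_eq_add.mp (comm2 n)]; abel

lemma hmp (n : ℕ) : Sm n * Sp n = Sp n * Sm n - (2 : ℂ) • S3 n := by
  rw [sub_eq_iff_eq_add.mp (comm4 n)]; abel

lemma cb1 (n : ℕ) : K3 n * Sp n - Sp n * K3 n = (-Complex.I) • Sp n := by
  rw [K3, smul_mul_assoc, mul_smul_comm, ← smul_sub, comm1]

lemma cb2 (n : ℕ) : K3 n * Sm n - Sm n * K3 n = Complex.I • Sm n := by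
  rw [K3, smul_mul_assoc, mul_smul_comm, ← smul_sub, comm2]
  simp

lemma cb3 (n : ℕ) : K2 n * Pm n - Pm n * K2 n = (-Complex.I) • Pm n := by
  simp only [K2, Pm, sub_mul, mul_sub, add_mul, mul_add, smul_mul_assoc, mul_smul_comm,
    smul_add, smul_sub, smul_smul]
  rw [hps n, hms n, hmp n]
  match_scalars <;>
    (first
      | ring1
      | (ring_nf; simp only [Complex.I_sq]; ring1))

lemma cb4 (n : ℕ) : K2 n * Qm n - Qm n * K2 n = Complex.I • Qm n := by
  simp only [K2, Qm, sub_mul, mul_sub, add_mul, mul_add, smul_mul_assoc, mul_smul_comm,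
    smul_add, smul_sub, smul_smul]
  rw [hps n, hms n, hmp n]
  match_scalars <;>
    (first
      | ring1
      | (ring_nf; simp only [Complex.I_sq]; ring1))

lemma expI_real (x : ℝ) :
    Complex.exp (Complex.I * x) = (Real.cos x : ℂ) + (Real.sin x : ℂ) * Complex.I := by
  rw [mul_comm, Complex.exp_mul_I, Complex.ofReal_cos, Complex.ofReal_sin]

lemma expI_real' (x : ℝ) :
    Complex.exp (-(Complex.I * x)) = (Real.cos x : ℂ) - (Real.sin x : ℂ) * Complex.I := by
  rw [show (-(Complex.I * (x:ℂ))) = ((-x : ℝ) : ℂ) * Complex.I by push_cast; ring,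
    Complex.exp_mul_I, Complex.ofReal_neg, Complex.cos_neg, Complex.sin_neg,
    Complex.ofReal_cos, Complex.ofReal_sin]
  ring

section LIN
attribute [local instance] Matrix.linftyOpNormedAddCommGroup Matrix.linftyOpNormedSpace
  Matrix.linftyOpNormedRing Matrix.linftyOpNormedAlgebra

variable {N : ℕ}

lemma hasDerivAt_expA (A : Matrix (Fin (N+1)) (Fin (N+1)) ℂ) (s : ℝ) :
    HasDerivAt (fun u : ℝ => NormedSpace.exp ((u : ℂ) • A))
      (NormedSpace.exp ((s : ℂ) • A) * A) s := by
  have h1 := hasDerivAt_exp_smul_const (𝕂 := ℂ) A ((s : ℝ) : ℂ)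
  have h2 : HasDerivAt (fun u : ℝ => ((u : ℝ) : ℂ)) 1 s := (hasDerivAt_id s).ofReal_comp
  have h3 := h1.scomp s h2
  simp only [one_smul, Function.comp_def] at h3
  exact h3

lemma hasDerivAt_expA_neg (A : Matrix (Fin (N+1)) (Fin (N+1)) ℂ) (s : ℝ) :
    HasDerivAt (fun u : ℝ => NormedSpace.exp (-((u : ℂ) • A)))
      (-(NormedSpace.exp (-((s : ℂ) • A)) * A)) s := by
  have h1 := hasDerivAt_exp_smul_const (𝕂 := ℂ) A (-(s : ℂ))
  have h2 : HasDerivAt (fun u : ℝ => -((u : ℝ) : ℂ)) (-1) s := by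
    simpa [Pi.neg_def] using ((hasDerivAt_id s).ofReal_comp).neg
  have h3 := h1.scomp s h2
  have h4 : ((fun u : ℂ => NormedSpace.exp (u • A)) ∘ fun u : ℝ => -((u : ℝ) : ℂ))
      = fun u : ℝ => NormedSpace.exp (-((u : ℂ) • A)) := by
    funext u; simp [neg_smul]
  simp only [Function.comp_def, neg_smul, one_smul] at h3
  exact h3

lemma conj_exp (A B : Matrix (Fin (N+1)) (Fin (N+1)) ℂ) (c : ℂ)
    (h : A * B - B * A = c • B) (t : ℝ) :
    NormedSpace.exp ((t : ℂ) • A) * B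
      = Complex.exp (c * t) • (B * NormedSpace.exp ((t : ℂ) • A)) := by
  have hAB : A * B = B * A + c • B := by rw [← h]; abel
  have hcommneg : ∀ s : ℝ, NormedSpace.exp (-((s : ℂ) • A)) * A
      = A * NormedSpace.exp (-((s : ℂ) • A)) :=
    fun s => ((((Commute.refl A).smul_right ((s : ℂ))).neg_right).exp_right).symm.eq
  set g : ℝ → Matrix (Fin (N+1)) (Fin (N+1)) ℂ := fun s =>
    Complex.exp (-(c * s)) •
      (NormedSpace.exp ((s : ℂ) • A) * B * NormedSpace.exp (-((s : ℂ) • A))) with hgdef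
  have hg : ∀ s, HasDerivAt g 0 s := by
    intro s
    have hsc : HasDerivAt (fun u : ℝ => Complex.exp (-(c * u))) (-c * Complex.exp (-(c * s))) s := by
      have hin : HasDerivAt (fun u : ℝ => -(c * (u : ℂ))) (-c) s := by
        simpa [Pi.neg_def] using (((hasDerivAt_id s).ofReal_comp).const_mul c).neg
      simpa [mul_comm, Function.comp_def] using (Complex.hasDerivAt_exp (-(c * s))).scomp s hin
    have hm := ((hasDerivAt_expA A s).mul_const B).mul (hasDerivAt_expA_neg A s)
    have hd := hsc.smul hm
    simp only [Pi.mul_apply] at hd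
    refine hd.congr_deriv ?_
    set E := NormedSpace.exp ((s : ℂ) • A)
    set E' := NormedSpace.exp (-((s : ℂ) • A))
    rw [hcommneg s, mul_assoc E A B, hAB]
    simp only [mul_add, add_mul, mul_smul_comm, smul_mul_assoc, mul_neg, neg_mul, mul_assoc,
      smul_add, smul_smul, smul_neg]
    module
  have hconst := is_const_of_deriv_eq_zero
    (fun s => (hg s).differentiableAt) (fun s => (hg s).deriv) t 0
  have hg0 : g 0 = B := by
    simp [hgdef, NormedSpace.exp_zero]
  rw [hg0] at hconst
  have hinv : NormedSpace.exp (-((t : ℂ) • A)) * NormedSpace.exp ((t : ℂ) • A) = 1 := by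
    have := NormedSpace.exp_add_of_commute (Commute.refl ((t : ℂ) • A)).neg_left
    rw [neg_add_cancel, NormedSpace.exp_zero] at this
    exact this.symm
  have h2 : NormedSpace.exp ((t : ℂ) • A) * B * NormedSpace.exp (-((t : ℂ) • A))
      = Complex.exp (c * t) • B := by
    have := congrArg (fun X => Complex.exp (c * t) • X) hconst
    simp only [hgdef] at this
    rwa [smul_smul, ← Complex.exp_add, add_neg_cancel, Complex.exp_zero, one_smul] at this
  calc NormedSpace.exp ((t : ℂ) • A) * B
      = NormedSpace.exp ((t : ℂ) • A) * B *
          (NormedSpace.exp (-((t : ℂ) • A)) * NormedSpace.exp ((t : ℂ) • A)) := by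
        rw [hinv, mul_one]
    _ = (NormedSpace.exp ((t : ℂ) • A) * B * NormedSpace.exp (-((t : ℂ) • A))) *
          NormedSpace.exp ((t : ℂ) • A) := by rw [← mul_assoc]
    _ = Complex.exp (c * t) • (B * NormedSpace.exp ((t : ℂ) • A)) := by
        rw [h2, smul_mul_assoc]

lemma conj_exp' (A B : Matrix (Fin (N+1)) (Fin (N+1)) ℂ) (c : ℂ)
    (h : A * B - B * A = c • B) (t : ℝ) :
    B * NormedSpace.exp ((t : ℂ) • A)
      = Complex.exp (-(c * t)) • (NormedSpace.exp ((t : ℂ) • A) * B) := by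
  rw [conj_exp A B c h t, smul_smul, ← Complex.exp_add, neg_add_cancel, Complex.exp_zero, one_smul]

lemma mvSpC (n : ℕ) (c : ℝ) :
    Sp n * NormedSpace.exp ((c : ℂ) • K3 n)
      = Complex.exp (Complex.I * c) • (NormedSpace.exp ((c : ℂ) • K3 n) * Sp n) := by
  have := conj_exp' (K3 n) (Sp n) (-Complex.I) (cb1 n) c
  simpa using this

lemma mvSmC (n : ℕ) (c : ℝ) :
    Sm n * NormedSpace.exp ((c : ℂ) • K3 n)
      = Complex.exp (-(Complex.I * c)) • (NormedSpace.exp ((c : ℂ) • K3 n) * Sm n) :=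
  conj_exp' (K3 n) (Sm n) Complex.I (cb2 n) c

lemma mvPmB (n : ℕ) (b : ℝ) :
    Pm n * NormedSpace.exp ((b : ℂ) • K2 n)
      = Complex.exp (Complex.I * b) • (NormedSpace.exp ((b : ℂ) • K2 n) * Pm n) := by
  have := conj_exp' (K2 n) (Pm n) (-Complex.I) (cb3 n) b
  simpa using this

lemma mvQmB (n : ℕ) (b : ℝ) :
    Qm n * NormedSpace.exp ((b : ℂ) • K2 n)
      = Complex.exp (-(Complex.I * b)) • (NormedSpace.exp ((b : ℂ) • K2 n) * Qm n) :=
  conj_exp' (K2 n) (Qm n) Complex.I (cb4 n) b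

lemma mvS3C (n : ℕ) (c : ℝ) :
    S3 n * NormedSpace.exp ((c : ℂ) • K3 n)
      = NormedSpace.exp ((c : ℂ) • K3 n) * S3 n := by
  have : Commute (S3 n) ((c : ℂ) • K3 n) := by
    rw [K3]
    exact ((Commute.refl (S3 n)).smul_right (-Complex.I)).smul_right ((c : ℂ))
  exact (this.exp_right).eq

end LIN
-- continuation: appended to full.lean for testing
noncomputable def Vm (n : ℕ) (c : ℝ) : Matrix (Fin (n+1)) (Fin (n+1)) ℂ :=
  (-(2:ℂ)⁻¹ * Complex.exp (Complex.I * c)) • Sp n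
    + ((2:ℂ)⁻¹ * Complex.exp (-(Complex.I * c))) • Sm n

noncomputable def Xm (n : ℕ) (b : ℝ) : Matrix (Fin (n+1)) (Fin (n+1)) ℂ :=
  (-Complex.I * (2:ℂ)⁻¹ * (Complex.exp (Complex.I * b) + Complex.exp (-(Complex.I * b)))) • S3 n
    + ((4:ℂ)⁻¹ * (Complex.exp (Complex.I * b) - Complex.exp (-(Complex.I * b)))) • Sp n
    + ((4:ℂ)⁻¹ * (Complex.exp (Complex.I * b) - Complex.exp (-(Complex.I * b)))) • Sm n

noncomputable def Wm (n : ℕ) (b c : ℝ) : Matrix (Fin (n+1)) (Fin (n+1)) ℂ :=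
  (-Complex.I * (2:ℂ)⁻¹ * (Complex.exp (Complex.I * b) + Complex.exp (-(Complex.I * b)))) • S3 n
    + ((4:ℂ)⁻¹ * (Complex.exp (Complex.I * b) - Complex.exp (-(Complex.I * b)))
        * Complex.exp (Complex.I * c)) • Sp n
    + ((4:ℂ)⁻¹ * (Complex.exp (Complex.I * b) - Complex.exp (-(Complex.I * b)))
        * Complex.exp (-(Complex.I * c))) • Sm n

lemma hS3PQ (n : ℕ) : S3 n = (4:ℂ)⁻¹ • (Pm n + Qm n) := by
  rw [Pm, Qm]; module

lemma hXPQ (n : ℕ) (b : ℝ) :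
    Xm n b = (-Complex.I * (4:ℂ)⁻¹ * Complex.exp (Complex.I * b)) • Pm n
      + (-Complex.I * (4:ℂ)⁻¹ * Complex.exp (-(Complex.I * b))) • Qm n := by
  rw [Xm, Pm, Qm]
  match_scalars <;>
    (first
      | ring1
      | (ring_nf; simp only [Complex.I_sq]; ring1))

section LIN2
attribute [local instance] Matrix.linftyOpNormedAddCommGroup Matrix.linftyOpNormedSpace
  Matrix.linftyOpNormedRing Matrix.linftyOpNormedAlgebra

lemma mvK2C (n : ℕ) (c : ℝ) :
    K2 n * NormedSpace.exp ((c : ℂ) • K3 n)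
      = NormedSpace.exp ((c : ℂ) • K3 n) * Vm n c := by
  rw [K2, smul_mul_assoc, sub_mul, mvSpC, mvSmC, Vm]
  simp only [mul_add, mul_smul_comm, smul_sub, smul_add, smul_smul]
  module

lemma mvK3B (n : ℕ) (b : ℝ) :
    K3 n * NormedSpace.exp ((b : ℂ) • K2 n)
      = NormedSpace.exp ((b : ℂ) • K2 n) * Xm n b := by
  conv_lhs => rw [K3, hS3PQ]
  rw [hXPQ]
  simp only [smul_smul, smul_mul_assoc, add_mul, smul_add]
  rw [mvPmB, mvQmB]
  simp only [mul_add, mul_smul_comm, smul_add, smul_smul]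
  try module

lemma mvXC (n : ℕ) (b c : ℝ) :
    Xm n b * NormedSpace.exp ((c : ℂ) • K3 n)
      = NormedSpace.exp ((c : ℂ) • K3 n) * Wm n b c := by
  rw [Xm, Wm]
  simp only [add_mul, smul_mul_assoc]
  rw [mvS3C, mvSpC, mvSmC]
  simp only [mul_add, mul_smul_comm, smul_add, smul_smul]
  try module

lemma hasDerivAt_expF {N : ℕ} (A : Matrix (Fin (N+1)) (Fin (N+1)) ℂ) (f : ℝ → ℝ) (t₀ : ℝ)
    (hf : DifferentiableAt ℝ f t₀) :
    HasDerivAt (fun t => NormedSpace.exp ((f t : ℂ) • A))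
      (((deriv f t₀ : ℝ) : ℂ) • (NormedSpace.exp ((f t₀ : ℂ) • A) * A)) t₀ := by
  have h1 := hasDerivAt_exp_smul_const (𝕂 := ℂ) A ((f t₀ : ℝ) : ℂ)
  have h2 : HasDerivAt (fun t : ℝ => ((f t : ℝ) : ℂ)) ((deriv f t₀ : ℝ) : ℂ) t₀ :=
    (hf.hasDerivAt).ofReal_comp
  have h3 := h1.scomp t₀ h2
  simp only [Function.comp_def] at h3
  exact h3

lemma main_lin (n : ℕ) (φ θ ψ : ℝ → ℝ) (t₀ : ℝ)
    (hφ : DifferentiableAt ℝ φ t₀) (hθ : DifferentiableAt ℝ θ t₀)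
    (hψ : DifferentiableAt ℝ ψ t₀) :
    HasDerivAt
      (fun t => NormedSpace.exp ((φ t : ℂ) • K3 n) *
        NormedSpace.exp ((θ t : ℂ) • K2 n) * NormedSpace.exp ((ψ t : ℂ) • K3 n))
      (NormedSpace.exp ((φ t₀ : ℂ) • K3 n) * NormedSpace.exp ((θ t₀ : ℂ) • K2 n) *
        NormedSpace.exp ((ψ t₀ : ℂ) • K3 n) *
        ((-Complex.I * ((deriv φ t₀ * Real.cos (θ t₀) + deriv ψ t₀ : ℝ) : ℂ)) • S3 n +
          ((1 / 2 : ℂ) *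
              (Complex.I * ((deriv φ t₀ : ℝ) : ℂ) * ((Real.sin (θ t₀) : ℝ) : ℂ) -
                ((deriv θ t₀ : ℝ) : ℂ)) *
              Complex.exp (Complex.I * ((ψ t₀ : ℝ) : ℂ))) • Sp n +
          ((1 / 2 : ℂ) *
              (Complex.I * ((deriv φ t₀ : ℝ) : ℂ) * ((Real.sin (θ t₀) : ℝ) : ℂ) +
                ((deriv θ t₀ : ℝ) : ℂ)) *
              Complex.exp (-(Complex.I * ((ψ t₀ : ℝ) : ℂ)))) • Sm n)) t₀ := by
  have hA := hasDerivAt_expF (K3 n) φ t₀ hφ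
  have hB := hasDerivAt_expF (K2 n) θ t₀ hθ
  have hC := hasDerivAt_expF (K3 n) ψ t₀ hψ
  have hF := (hA.mul hB).mul hC
  simp only [Pi.mul_apply] at hF
  refine hF.congr_deriv ?_
  set EA := NormedSpace.exp ((φ t₀ : ℂ) • K3 n) with hEA
  set EB := NormedSpace.exp ((θ t₀ : ℂ) • K2 n) with hEB
  set EC := NormedSpace.exp ((ψ t₀ : ℂ) • K3 n) with hEC
  have e6 : K3 n * (EB * EC) = EB * (EC * Wm n (θ t₀) (ψ t₀)) := by
    rw [← mul_assoc, mvK3B, mul_assoc, mvXC]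
  have e7 : K2 n * EC = EC * Vm n (ψ t₀) := mvK2C n (ψ t₀)
  have hM : (-Complex.I * ((deriv φ t₀ * Real.cos (θ t₀) + deriv ψ t₀ : ℝ) : ℂ)) • S3 n +
          ((1 / 2 : ℂ) *
              (Complex.I * ((deriv φ t₀ : ℝ) : ℂ) * ((Real.sin (θ t₀) : ℝ) : ℂ) -
                ((deriv θ t₀ : ℝ) : ℂ)) *
              Complex.exp (Complex.I * ((ψ t₀ : ℝ) : ℂ))) • Sp n +
          ((1 / 2 : ℂ) *
              (Complex.I * ((deriv φ t₀ : ℝ) : ℂ) * ((Real.sin (θ t₀) : ℝ) : ℂ) +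
                ((deriv θ t₀ : ℝ) : ℂ)) *
              Complex.exp (-(Complex.I * ((ψ t₀ : ℝ) : ℂ)))) • Sm n
      = ((deriv φ t₀ : ℝ) : ℂ) • Wm n (θ t₀) (ψ t₀)
        + ((deriv θ t₀ : ℝ) : ℂ) • Vm n (ψ t₀)
        + ((deriv ψ t₀ : ℝ) : ℂ) • K3 n := by
    rw [Wm, Vm, K3]
    match_scalars <;>
      (rw [expI_real (θ t₀), expI_real' (θ t₀)]; push_cast; ring)
  rw [hM]
  simp only [smul_mul_assoc, mul_smul_comm, add_mul, mul_add, mul_assoc, smul_add]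
  rw [e6, e7]
  try simp only [mul_add, mul_smul_comm, smul_add, smul_smul]
  try module

end LIN2

section LIN3
attribute [local instance] Matrix.linftyOpNormedAddCommGroup Matrix.linftyOpNormedSpace
  Matrix.linftyOpNormedRing Matrix.linftyOpNormedAlgebra

lemma entries_of_lin {N : ℕ} (F : ℝ → Matrix (Fin (N+1)) (Fin (N+1)) ℂ)
    (D : Matrix (Fin (N+1)) (Fin (N+1)) ℂ) (t₀ : ℝ) (h : HasDerivAt F D t₀)
    (i j : Fin (N+1)) : HasDerivAt (fun t => F t i j) (D i j) t₀ := by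
  let L : Matrix (Fin (N+1)) (Fin (N+1)) ℂ →ₗ[ℝ] ℂ :=
    { toFun := fun A => A i j, map_add' := fun _ _ => rfl, map_smul' := fun _ _ => rfl }
  exact (L.toContinuousLinearMap.hasFDerivAt (x := F t₀)).comp_hasDerivAt t₀ h
end LIN3

attribute [local instance] Matrix.normedAddCommGroup Matrix.normedSpace

/-- Rotation matrix `R(φ,θ,ψ) = exp(-iφS₃)·exp(-iθS₂)·exp(-iψS₃)`. -/
noncomputable def Rot (n : ℕ) (φ θ ψ : ℝ) : Matrix (Fin (n+1)) (Fin (n+1)) ℂ :=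
  NormedSpace.exp ((-Complex.I * (φ : ℂ)) • S3 n) *
    NormedSpace.exp ((-Complex.I * (θ : ℂ)) • S2 n) *
      NormedSpace.exp ((-Complex.I * (ψ : ℂ)) • S3 n)


/-- Derivative identity for a rotating frame: `d/dt R(Ω(t)) = R(Ω(t₀)) · M` at
`t₀`, where
`M = -i(φ' cos θ + ψ')S₃ + ½(iφ' sin θ - θ')e^{iψ}S₊ + ½(iφ' sin θ + θ')e^{-iψ}S₋`
(all functions evaluated at `t₀`). -/
theorem rotating_frame_derivative (n : ℕ) (φ θ ψ : ℝ → ℝ) (t₀ : ℝ)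
    (hφ : DifferentiableAt ℝ φ t₀) (hθ : DifferentiableAt ℝ θ t₀)
    (hψ : DifferentiableAt ℝ ψ t₀) :
    HasDerivAt (fun t => Rot n (φ t) (θ t) (ψ t))
      (Rot n (φ t₀) (θ t₀) (ψ t₀) *
        ((-Complex.I * ((deriv φ t₀ * Real.cos (θ t₀) + deriv ψ t₀ : ℝ) : ℂ)) • S3 n +
          ((1 / 2 : ℂ) *
              (Complex.I * ((deriv φ t₀ : ℝ) : ℂ) * ((Real.sin (θ t₀) : ℝ) : ℂ) -
                ((deriv θ t₀ : ℝ) : ℂ)) *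
              Complex.exp (Complex.I * ((ψ t₀ : ℝ) : ℂ))) • Sp n +
          ((1 / 2 : ℂ) *
              (Complex.I * ((deriv φ t₀ : ℝ) : ℂ) * ((Real.sin (θ t₀) : ℝ) : ℂ) +
                ((deriv θ t₀ : ℝ) : ℂ)) *
              Complex.exp (-(Complex.I * ((ψ t₀ : ℝ) : ℂ)))) • Sm n)) t₀ := by
  have key := main_lin n φ θ ψ t₀ hφ hθ hψ
  have harg3 : ∀ x : ℝ, (-Complex.I * (x : ℂ)) • S3 n = (x : ℂ) • K3 n := fun x => by
    rw [K3, smul_smul]; congr 1; ring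
  have harg2 : ∀ x : ℝ, (-Complex.I * (x : ℂ)) • S2 n = (x : ℂ) • K2 n := fun x => by
    rw [K2, S2, smul_smul, smul_smul]; congr 1
    have h2I : (2 : ℂ) * Complex.I ≠ 0 := by simp [Complex.I_ne_zero]
    field_simp
    try ring_nf
    try simp only [Complex.I_sq]
    try ring
  have hfun : (fun t => Rot n (φ t) (θ t) (ψ t))
      = fun t => NormedSpace.exp ((φ t : ℂ) • K3 n) *
          NormedSpace.exp ((θ t : ℂ) • K2 n) * NormedSpace.exp ((ψ t : ℂ) • K3 n) := by
    funext t; rw [Rot, harg3, harg2, harg3]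
  have hRot : Rot n (φ t₀) (θ t₀) (ψ t₀)
      = NormedSpace.exp ((φ t₀ : ℂ) • K3 n) * NormedSpace.exp ((θ t₀ : ℂ) • K2 n) *
        NormedSpace.exp ((ψ t₀ : ℂ) • K3 n) := by
    rw [Rot, harg3, harg2, harg3]
  rw [hfun, hRot]
  exact hasDerivAt_pi.mpr fun i => hasDerivAt_pi.mpr fun j => entries_of_lin _ _ _ key i j
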